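/- Let P be the smallest collection of unordered pairs of angles in ℝ/ℤ containing {1/3, 2/3} and closed under the two operations {s, t} ↦ {s/2, t/2 + 1/2} and {s, t} ↦ {s/2 + 1/2, t/2}. Then every basilica angle belongs to at least one pair in P. -/
import Mathlib


/-- Halving using the canonical representative in `[0,1)`. -/
noncomputable def half (t : UnitAddCircle) : UnitAddCircle :=
  ((((AddCircle.equivIco 1 0) t : ℝ) / 2 : ℝ) : UnitAddCircle)

/-- `basPair s t` means the unordered pair `{s, t}` belongs to the smallest collection
of unordered pairs of angles containing `{1/3, 2/3}` and closed under
`{s, t} ↦ {s/2, t/2 + 1/2}` and `{s, t} ↦ {s/2 + 1/2, t/2}`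
(the leaves of the basilica lamination). -/
inductive basPair : UnitAddCircle → UnitAddCircle → Prop
  | base : basPair ((1 / 3 : ℝ) : UnitAddCircle) ((2 / 3 : ℝ) : UnitAddCircle)
  | symm {s t : UnitAddCircle} : basPair s t → basPair t s
  | op1 {s t : UnitAddCircle} : basPair s t →
      basPair (half s) (half t + ((1 / 2 : ℝ) : UnitAddCircle))
  | op2 {s t : UnitAddCircle} : basPair s t →
      basPair (half s + ((1 / 2 : ℝ) : UnitAddCircle)) (half t)

/-- Every point of the circle is one of the two halves of its double. -/
lemma half_double (t : UnitAddCircle) :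
    t = half (2 • t) ∨ t = half (2 • t) + ((1 / 2 : ℝ) : UnitAddCircle) := by
  set x : ℝ := ((AddCircle.equivIco 1 0) t : ℝ) with hx
  have hmem := ((AddCircle.equivIco 1 0) t).2
  rw [← hx] at hmem
  have hx0 : 0 ≤ x := hmem.1
  have hx1 : x < 0 + 1 := hmem.2
  have ht : (x : UnitAddCircle) = t := by
    have h := (AddCircle.equivIco 1 0).symm_apply_apply t
    rw [← h, hx]; rfl
  have key : 2 • t = ((2 * x : ℝ) : UnitAddCircle) := by
    rw [← ht, two_nsmul, ← AddCircle.coe_add, two_mul]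
  rw [key, half]
  have hev : ((AddCircle.equivIco 1 0) (((2 * x : ℝ) : UnitAddCircle)) : ℝ)
      = Int.fract (2 * x) := by
    have h := AddCircle.coe_equivIco_mk_apply (p := (1:ℝ)) (2 * x)
    simpa using h
  rw [hev]
  by_cases hc : 2 * x < 1
  · left
    have h : Int.fract (2 * x) = 2 * x := Int.fract_eq_self.2 ⟨by linarith, hc⟩
    rw [h, ← ht]
    norm_num
  · right
    have h1 : Int.fract (2 * x) = 2 * x - 1 := by
      have hfl : ⌊2 * x⌋ = 1 := by
        rw [Int.floor_eq_iff]
        push_cast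
        constructor <;> linarith
      rw [Int.fract, hfl]; push_cast; ring
    rw [h1, ← AddCircle.coe_add, ← ht]
    congr 1
    ring

/-- Every basilica angle belongs to at least one leaf of the basilica lamination. -/
theorem basilica_angle_mem_pair (t : UnitAddCircle)
    (hbas : ∃ n : ℕ, (2 ^ n : ℕ) • t = ((1 / 3 : ℝ) : UnitAddCircle)) :
    ∃ s : UnitAddCircle, basPair t s := by
  obtain ⟨n, hn⟩ := hbas
  induction n generalizing t with
  | zero =>
    rw [pow_zero, one_smul] at hn
    exact ⟨_, hn ▸ basPair.base⟩
  | succ n ih =>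
    have h2 : (2 ^ n : ℕ) • (2 • t) = ((1 / 3 : ℝ) : UnitAddCircle) := by
      rw [← hn, ← mul_smul, ← pow_succ]
    obtain ⟨s, hs⟩ := ih (2 • t) h2
    rcases half_double t with h | h
    · exact ⟨_, by rw [h]; exact basPair.op1 hs⟩
    · exact ⟨_, by rw [h]; exact basPair.op2 hs⟩
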